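/- Correctness of the reduction in Theorem 1 (NP-hardness of checking maximality of a quasi-clique): Let G' = (V',E') be a finite simple graph, r a positive integer, G = G(G',r) the gadget graph, X = A₁ ∪ A₂ ∪ B, and γ_r = (r²+r−1)/(2r²+2r−1). Then X is a γ_r-quasi-clique of G, and X is NOT a maximal γ_r-quasi-clique in G if and only if G' contains a clique of size r. -/

import Mathlib

open SimpleGraph Set

/-- Vertex type of the gadget graph: the original vertices `V`, plus
`A₁` and `A₂` (each of size `r²`) and `B` (of size `r`). -/
abbrev GadgetV (V : Type*) (r : ℕ) : Type _ := V ⊕ (Fin (r ^ 2) ⊕ Fin (r ^ 2) ⊕ Fin r)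

/-- Membership in `A₁`. -/
def isA1 {V : Type*} {r : ℕ} : GadgetV V r → Prop
  | Sum.inr (Sum.inl _) => True
  | _ => False

/-- Membership in `A₂`. -/
def isA2 {V : Type*} {r : ℕ} : GadgetV V r → Prop
  | Sum.inr (Sum.inr (Sum.inl _)) => True
  | _ => False

/-- Membership in `B`. -/
def isB {V : Type*} {r : ℕ} : GadgetV V r → Prop
  | Sum.inr (Sum.inr (Sum.inr _)) => True
  | _ => False

/-- The gadget graph `G(G',r)`: all edges of `G'`, `A₁`, `A₂`, `B` are cliques,
all pairs between `A₁` and `A₂`, between `A₁` and `B`, and between `A₁` and `V'`.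
(A vertex of `A₁` is adjacent to every other vertex.) -/
def gadget {V : Type*} (G' : SimpleGraph V) (r : ℕ) : SimpleGraph (GadgetV V r) :=
  SimpleGraph.fromRel fun a b =>
    isA1 a ∨ (∃ u v, a = Sum.inl u ∧ b = Sum.inl v ∧ G'.Adj u v) ∨
      (isA2 a ∧ isA2 b) ∨ (isB a ∧ isB b)

/-- The set `X = A₁ ∪ A₂ ∪ B`. -/
def Xset (V : Type*) (r : ℕ) : Set (GadgetV V r) := {x | isA1 x ∨ isA2 x ∨ isB x}

/-- Degree of a vertex `v` in the subgraph of `G` induced on `Q`: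
the number of neighbors of `v` lying in `Q`. -/
noncomputable def degIn {W : Type*} (G : SimpleGraph W) (Q : Set W) (v : W) : ℕ :=
  (Q ∩ G.neighborSet v).ncard

/-- `Q` is a `γ`-quasi-clique in `G`: the induced subgraph `G[Q]` is connected and
every vertex of `Q` has degree at least `⌈γ·(|Q|-1)⌉` in `G[Q]`. -/
def IsQuasiClique {W : Type*} (G : SimpleGraph W) (γ : ℚ) (Q : Set W) : Prop :=
  (G.induce Q).Connected ∧ ∀ v ∈ Q, ⌈γ * ((Q.ncard : ℚ) - 1)⌉ ≤ (degIn G Q v : ℤ)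

/-- `γ_r = (r²+r−1)/(2r²+2r−1)`. -/
def gammaR (r : ℕ) : ℚ := ((r : ℚ) ^ 2 + r - 1) / (2 * (r : ℚ) ^ 2 + 2 * r - 1)

namespace StmtAux
variable {V : Type*} (G' : SimpleGraph V) (r : ℕ)

abbrev a1 (V : Type*) (r : ℕ) (i : Fin (r^2)) : GadgetV V r := Sum.inr (Sum.inl i)
abbrev a2 (V : Type*) (r : ℕ) (i : Fin (r^2)) : GadgetV V r := Sum.inr (Sum.inr (Sum.inl i))
abbrev bb (V : Type*) (r : ℕ) (i : Fin r) : GadgetV V r := Sum.inr (Sum.inr (Sum.inr i))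

def A1s (V : Type*) (r : ℕ) : Set (GadgetV V r) := {x | isA1 x}
def A2s (V : Type*) (r : ℕ) : Set (GadgetV V r) := {x | isA2 x}
def Bs (V : Type*) (r : ℕ) : Set (GadgetV V r) := {x | isB x}

lemma A1s_eq : A1s V r = Set.range (a1 V r) := by
  ext x; rcases x with u | i | i | i <;> simp [A1s, isA1, a1]

lemma A2s_eq : A2s V r = Set.range (a2 V r) := by
  ext x; rcases x with u | i | i | i <;> simp [A2s, isA2, a2]

lemma Bs_eq : Bs V r = Set.range (bb V r) := by
  ext x; rcases x with u | i | i | i <;> simp [Bs, isB, bb]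

lemma ncard_A1s : (A1s V r).ncard = r ^ 2 := by
  rw [A1s_eq, ← Nat.card_coe_set_eq, Nat.card_range_of_injective]
  · simp
  · intro i j h; simpa [a1] using h

lemma ncard_A2s : (A2s V r).ncard = r ^ 2 := by
  rw [A2s_eq, ← Nat.card_coe_set_eq, Nat.card_range_of_injective]
  · simp
  · intro i j h; simpa [a2] using h

lemma ncard_Bs : (Bs V r).ncard = r := by
  rw [Bs_eq, ← Nat.card_coe_set_eq, Nat.card_range_of_injective]
  · simp
  · intro i j h; simpa [bb] using h

lemma Xset_eq : Xset V r = A1s V r ∪ (A2s V r ∪ Bs V r) := by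
  ext x; simp [Xset, A1s, A2s, Bs]

/-- Adjacency lemmas -/
lemma adj_a1 (i : Fin (r^2)) (x : GadgetV V r) (h : x ≠ a1 V r i) :
    (gadget G' r).Adj (a1 V r i) x := by
  rw [gadget, fromRel_adj]
  exact ⟨fun h' => h h'.symm, Or.inl (Or.inl trivial)⟩

lemma adj_a2 (i j : Fin (r^2)) (h : i ≠ j) : (gadget G' r).Adj (a2 V r i) (a2 V r j) := by
  rw [gadget, fromRel_adj]
  refine ⟨by simp [a2, h], Or.inl (Or.inr (Or.inr (Or.inl ⟨trivial, trivial⟩)))⟩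

lemma adj_bb (i j : Fin r) (h : i ≠ j) : (gadget G' r).Adj (bb V r i) (bb V r j) := by
  rw [gadget, fromRel_adj]
  refine ⟨by simp [bb, h], Or.inl (Or.inr (Or.inr (Or.inr ⟨trivial, trivial⟩)))⟩

lemma adj_inl {u v : V} (h : G'.Adj u v) :
    (gadget G' r).Adj (Sum.inl u : GadgetV V r) (Sum.inl v) := by
  rw [gadget, fromRel_adj]
  exact ⟨by simp [h.ne], Or.inl (Or.inr (Or.inl ⟨u, v, rfl, rfl, h⟩))⟩

lemma adj_inl_iff {u v : V} :
    (gadget G' r).Adj (Sum.inl u : GadgetV V r) (Sum.inl v) ↔ G'.Adj u v := by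
  constructor
  · rw [gadget, fromRel_adj]
    rintro ⟨hne, (h | ⟨a, b, ha, hb, hab⟩ | ⟨h, -⟩ | ⟨h, -⟩) |
      (h | ⟨a, b, ha, hb, hab⟩ | ⟨-, h⟩ | ⟨-, h⟩)⟩ <;>
      first
      | exact absurd h (by simp [isA1, isA2, isB])
      | (injection ha with ha; injection hb with hb; subst ha; subst hb;
         first | exact hab | exact hab.symm)
  · exact adj_inl G' r

lemma not_adj_a2_inl (i : Fin (r^2)) (u : V) :
    ¬ (gadget G' r).Adj (a2 V r i) (Sum.inl u) := by
  rw [gadget, fromRel_adj]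
  rintro ⟨-, (h | ⟨a, b, ha, hb, hab⟩ | ⟨-, h⟩ | ⟨-, h⟩) |
    (h | ⟨a, b, ha, hb, hab⟩ | ⟨h, -⟩ | ⟨h, -⟩)⟩ <;>
    simp_all [isA1, isA2, isB, a2]

lemma not_adj_bb_inl (i : Fin r) (u : V) :
    ¬ (gadget G' r).Adj (bb V r i) (Sum.inl u) := by
  rw [gadget, fromRel_adj]
  rintro ⟨-, (h | ⟨a, b, ha, hb, hab⟩ | ⟨-, h⟩ | ⟨-, h⟩) |
    (h | ⟨a, b, ha, hb, hab⟩ | ⟨h, -⟩ | ⟨h, -⟩)⟩ <;>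
    simp_all [isA1, isA2, isB, bb]

lemma not_adj_a2_bb (i : Fin (r^2)) (j : Fin r) :
    ¬ (gadget G' r).Adj (a2 V r i) (bb V r j) := by
  rw [gadget, fromRel_adj]
  rintro ⟨-, (h | ⟨a, b, ha, hb, hab⟩ | ⟨-, h⟩ | ⟨h, -⟩) |
    (h | ⟨a, b, ha, hb, hab⟩ | ⟨h, -⟩ | ⟨-, h⟩)⟩ <;>
    simp_all [isA1, isA2, isB, a2, bb]


def QS (V : Type*) (r : ℕ) (S : Set V) : Set (GadgetV V r) := Xset V r ∪ Sum.inl '' S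

lemma inl_not_mem_Xset (u : V) : (Sum.inl u : GadgetV V r) ∉ Xset V r := by
  simp [Xset, isA1, isA2, isB]

lemma a1_mem_QS (S : Set V) (i : Fin (r^2)) : a1 V r i ∈ QS V r S :=
  Or.inl (Or.inl trivial)

lemma mem_QS_inl (S : Set V) (u : V) : (Sum.inl u : GadgetV V r) ∈ QS V r S ↔ u ∈ S := by
  simp [QS, inl_not_mem_Xset, Xset, isA1, isA2, isB]

lemma ncard_QS (S : Set V) [Fintype V] : (QS V r S).ncard = 2 * r^2 + r + S.ncard := by
  have hd1 : Disjoint (Xset V r) (Sum.inl '' S : Set (GadgetV V r)) := by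
    rw [Set.disjoint_left]
    rintro x hx ⟨u, hu, rfl⟩
    exact inl_not_mem_Xset r u hx
  have hd2 : Disjoint (A1s V r) (A2s V r ∪ Bs V r) := by
    rw [Set.disjoint_left]
    rintro (u | i | i | i) hx hy <;> simp_all [A1s, A2s, Bs, isA1, isA2, isB]
  have hd3 : Disjoint (A2s V r) (Bs V r) := by
    rw [Set.disjoint_left]
    rintro (u | i | i | i) hx hy <;> simp_all [A2s, Bs, isA2, isB]
  rw [QS, Set.ncard_union_eq hd1 (Set.toFinite _) (Set.toFinite _),
    Set.ncard_image_of_injective _ Sum.inl_injective, Xset_eq,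
    Set.ncard_union_eq hd2 (Set.toFinite _) (Set.toFinite _),
    Set.ncard_union_eq hd3 (Set.toFinite _) (Set.toFinite _),
    ncard_A1s, ncard_A2s, ncard_Bs]
  ring

lemma degIn_a1 (S : Set V) [Fintype V] (i : Fin (r^2)) :
    degIn (gadget G' r) (QS V r S) (a1 V r i) = 2 * r^2 + r + S.ncard - 1 := by
  have h : QS V r S ∩ (gadget G' r).neighborSet (a1 V r i) = QS V r S \ {a1 V r i} := by
    ext x
    simp only [Set.mem_inter_iff, mem_neighborSet, Set.mem_diff, Set.mem_singleton_iff]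
    exact and_congr_right fun _ => ⟨fun h => h.ne', fun h => adj_a1 G' r i x h⟩
  rw [degIn, h, Set.ncard_diff_singleton_of_mem (a1_mem_QS r S i), ncard_QS]


lemma disj_A1s_sub {T : Set (GadgetV V r)} (hT : T ⊆ A2s V r ∪ Bs V r ∪ Sum.inl '' (Set.univ : Set V)) :
    Disjoint (A1s V r) T := by
  rw [Set.disjoint_left]
  intro x hx hxT
  rcases hT hxT with ((h | h) | ⟨u, -, he⟩) <;>
    rcases x with v | i | i | i <;> simp_all [A1s, A2s, Bs, isA1, isA2, isB]

lemma degIn_a2 (S : Set V) [Fintype V] (i : Fin (r^2)) :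
    degIn (gadget G' r) (QS V r S) (a2 V r i) = 2 * r^2 - 1 := by
  have h : QS V r S ∩ (gadget G' r).neighborSet (a2 V r i)
      = A1s V r ∪ (A2s V r \ {a2 V r i}) := by
    ext x
    simp only [Set.mem_inter_iff, mem_neighborSet, Set.mem_union, Set.mem_diff,
      Set.mem_singleton_iff]
    rcases x with u | j | j | j
    · simp [mem_QS_inl, not_adj_a2_inl G' r i u, A1s, A2s, isA1, isA2]
    · refine ⟨fun _ => Or.inl trivial, fun _ => ⟨a1_mem_QS r S j, ?_⟩⟩
      exact (adj_a1 G' r j (a2 V r i) (by simp [a1, a2])).symm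
    · constructor
      · rintro ⟨-, hadj⟩
        refine Or.inr ⟨trivial, fun hx => ?_⟩
        rw [hx] at hadj; exact hadj.ne rfl
      · rintro (h | ⟨-, hne⟩)
        · exact absurd h (by simp [A1s, isA1])
        · refine ⟨Or.inl (Or.inr (Or.inl trivial)), adj_a2 G' r i j ?_⟩
          intro hij; exact hne (by rw [hij])
    · have := not_adj_a2_bb G' r i j
      constructor
      · rintro ⟨-, hadj⟩; exact absurd hadj this
      · rintro (h | ⟨h, -⟩) <;> exact absurd h (by simp [A1s, A2s, isA1, isA2])
  have hd : Disjoint (A1s V r) (A2s V r \ {a2 V r i}) :=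
    disj_A1s_sub r (fun x hx => Or.inl (Or.inl hx.1))
  rw [degIn, h, Set.ncard_union_eq hd (Set.toFinite _) (Set.toFinite _), ncard_A1s,
    Set.ncard_diff_singleton_of_mem (show a2 V r i ∈ A2s V r from trivial), ncard_A2s]
  omega

lemma degIn_bb (S : Set V) [Fintype V] (i : Fin r) :
    degIn (gadget G' r) (QS V r S) (bb V r i) = r^2 + r - 1 := by
  have h : QS V r S ∩ (gadget G' r).neighborSet (bb V r i)
      = A1s V r ∪ (Bs V r \ {bb V r i}) := by
    ext x
    simp only [Set.mem_inter_iff, mem_neighborSet, Set.mem_union, Set.mem_diff,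
      Set.mem_singleton_iff]
    rcases x with u | j | j | j
    · simp [mem_QS_inl, not_adj_bb_inl G' r i u, A1s, Bs, isA1, isB]
    · refine ⟨fun _ => Or.inl trivial, fun _ => ⟨a1_mem_QS r S j, ?_⟩⟩
      exact (adj_a1 G' r j (bb V r i) (by simp [a1, bb])).symm
    · have := not_adj_a2_bb G' r j i
      constructor
      · rintro ⟨-, hadj⟩; exact absurd hadj.symm this
      · rintro (h | ⟨h, -⟩) <;> exact absurd h (by simp [A1s, Bs, isA1, isB])
    · constructor
      · rintro ⟨-, hadj⟩
        refine Or.inr ⟨trivial, fun hx => ?_⟩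
        rw [hx] at hadj; exact hadj.ne rfl
      · rintro (h | ⟨-, hne⟩)
        · exact absurd h (by simp [A1s, isA1])
        · refine ⟨Or.inl (Or.inr (Or.inr trivial)), adj_bb G' r i j ?_⟩
          intro hij; exact hne (by rw [hij])
  have hd : Disjoint (A1s V r) (Bs V r \ {bb V r i}) :=
    disj_A1s_sub r (fun x hx => Or.inl (Or.inr hx.1))
  rw [degIn, h, Set.ncard_union_eq hd (Set.toFinite _) (Set.toFinite _), ncard_A1s,
    Set.ncard_diff_singleton_of_mem (show bb V r i ∈ Bs V r from trivial), ncard_Bs]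
  have := i.pos
  generalize r ^ 2 = a
  omega

lemma degIn_inl (S : Set V) [Fintype V] (u : V) :
    degIn (gadget G' r) (QS V r S) (Sum.inl u)
      = r^2 + (S ∩ G'.neighborSet u).ncard := by
  have h : QS V r S ∩ (gadget G' r).neighborSet (Sum.inl u)
      = A1s V r ∪ Sum.inl '' (S ∩ G'.neighborSet u) := by
    ext x
    simp only [Set.mem_inter_iff, mem_neighborSet, Set.mem_union, Set.mem_image,
      Set.mem_inter_iff]
    rcases x with v | j | j | j
    · simp only [mem_QS_inl]
      constructor
      · rintro ⟨hv, hadj⟩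
        exact Or.inr ⟨v, ⟨hv, (adj_inl_iff G' r).1 hadj⟩, rfl⟩
      · rintro (h | ⟨w, ⟨hw, hadj⟩, hwv⟩)
        · exact absurd h (by simp [A1s, isA1])
        · injection hwv with hwv; subst hwv
          exact ⟨hw, adj_inl G' r hadj⟩
    · refine ⟨fun _ => Or.inl trivial, fun _ => ⟨a1_mem_QS r S j, ?_⟩⟩
      exact (adj_a1 G' r j (Sum.inl u) (by simp [a1])).symm
    · have := not_adj_a2_inl G' r j u
      constructor
      · rintro ⟨-, hadj⟩; exact absurd hadj.symm this
      · rintro (h | ⟨w, -, hw⟩)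
        · exact absurd h (by simp [A1s, isA1])
        · exact absurd hw (by simp [a2])
    · have := not_adj_bb_inl G' r j u
      constructor
      · rintro ⟨-, hadj⟩; exact absurd hadj.symm this
      · rintro (h | ⟨w, -, hw⟩)
        · exact absurd h (by simp [A1s, isA1])
        · exact absurd hw (by simp [bb])
  have hd : Disjoint (A1s V r) (Sum.inl '' (S ∩ G'.neighborSet u) : Set (GadgetV V r)) :=
    disj_A1s_sub r (fun x hx => by
      obtain ⟨w, -, rfl⟩ := hx; exact Or.inr ⟨w, trivial, rfl⟩)
  rw [degIn, h, Set.ncard_union_eq hd (Set.toFinite _) (Set.toFinite _), ncard_A1s,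
    Set.ncard_image_of_injective _ Sum.inl_injective]


lemma den_pos (hr : 0 < r) : (0:ℚ) < 2 * (r:ℚ)^2 + 2*r - 1 := by
  have h1 : (1:ℚ) ≤ r := by exact_mod_cast hr
  nlinarith

lemma ceil_le_of (hr : 0 < r) (s m : ℕ)
    (h : ((r:ℚ)^2 + r - 1) * ((2*(r:ℚ)^2 + r + s) - 1) ≤ (m:ℚ) * (2*(r:ℚ)^2 + 2*r - 1)) :
    ⌈gammaR r * (((2*r^2 + r + s : ℕ) : ℚ) - 1)⌉ ≤ (m : ℤ) := by
  rw [Int.ceil_le, gammaR, div_mul_eq_mul_div, div_le_iff₀ (den_pos r hr)]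
  push_cast
  linear_combination h

lemma of_ceil_le (hr : 0 < r) (s m : ℕ)
    (h : ⌈gammaR r * (((2*r^2 + r + s : ℕ) : ℚ) - 1)⌉ ≤ (m : ℤ)) :
    ((r:ℚ)^2 + r - 1) * ((2*(r:ℚ)^2 + r + s) - 1) ≤ (m:ℚ) * (2*(r:ℚ)^2 + 2*r - 1) := by
  rw [Int.ceil_le, gammaR, div_mul_eq_mul_div, div_le_iff₀ (den_pos r hr)] at h
  push_cast at h ⊢
  linear_combination h

lemma cast_b (hr : 0 < r) : ((r^2 + r - 1 : ℕ) : ℚ) = (r:ℚ)^2 + r - 1 := by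
  have h1 : 1 ≤ r^2 + r := by nlinarith
  push_cast [Nat.cast_sub h1]
  ring

lemma T1 (hr : 0 < r) (s : ℕ) (hs : s ≤ r) :
    ⌈gammaR r * (((2*r^2 + r + s : ℕ) : ℚ) - 1)⌉ ≤ ((r^2 + r - 1 : ℕ) : ℤ) := by
  apply ceil_le_of r hr
  have h1 : (1:ℚ) ≤ r := by exact_mod_cast hr
  have h2 : (s:ℚ) ≤ r := by exact_mod_cast hs
  have h3 : ((r^2 + r - 1 : ℕ) : ℚ) = (r:ℚ)^2 + r - 1 := cast_b r hr
  rw [h3]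
  nlinarith

lemma T2 (hr : 0 < r) (s : ℕ) (hs : s ≤ r) :
    ⌈gammaR r * (((2*r^2 + r + s : ℕ) : ℚ) - 1)⌉ ≤ ((2*r^2 - 1 : ℕ) : ℤ) := by
  refine le_trans (T1 r hr s hs) ?_
  have h1 : 1 ≤ r^2 + r := by nlinarith
  have h2 : r ≤ r^2 := by nlinarith
  have h3 : 1 ≤ 2*r^2 := by nlinarith
  omega

lemma T3 (hr : 0 < r) (s : ℕ) (hs : s ≤ r) :
    ⌈gammaR r * (((2*r^2 + r + s : ℕ) : ℚ) - 1)⌉ ≤ ((2*r^2 + r + s - 1 : ℕ) : ℤ) := by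
  refine le_trans (T1 r hr s hs) ?_
  have h1 : 1 ≤ r^2 + r := by nlinarith
  have h2 : r ≤ r^2 := by nlinarith
  omega

lemma T4 (hr : 0 < r) (s : ℕ)
    (h : ⌈gammaR r * (((2*r^2 + r + s : ℕ) : ℚ) - 1)⌉ ≤ ((r^2 + r - 1 : ℕ) : ℤ)) :
    s ≤ r := by
  have h' := of_ceil_le r hr s _ h
  rw [cast_b r hr] at h'
  have h1 : (1:ℚ) ≤ r := by exact_mod_cast hr
  have hN : (0:ℚ) < (r:ℚ)^2 + r - 1 := by nlinarith
  have h'' := (mul_le_mul_iff_right₀ hN).mp h'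
  have h2 : (s:ℚ) ≤ r := by linarith
  exact_mod_cast h2

lemma T5 (hr : 0 < r) (s d : ℕ) (hd : d + 1 ≤ s)
    (h : ⌈gammaR r * (((2*r^2 + r + s : ℕ) : ℚ) - 1)⌉ ≤ ((r^2 + d : ℕ) : ℤ)) :
    r ≤ s := by
  have h' := of_ceil_le r hr s _ h
  have h1 : (1:ℚ) ≤ r := by exact_mod_cast hr
  have h2 : (d:ℚ) + 1 ≤ s := by exact_mod_cast hd
  push_cast at h'
  have h3 : (r:ℚ) ≤ s := by nlinarith
  exact_mod_cast h3

lemma T6 (hr : 0 < r) (d : ℕ)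
    (h : ⌈gammaR r * (((2*r^2 + r + r : ℕ) : ℚ) - 1)⌉ ≤ ((r^2 + d : ℕ) : ℤ)) :
    r ≤ d + 1 := by
  have h' := of_ceil_le r hr r _ h
  have h1 : (1:ℚ) ≤ r := by exact_mod_cast hr
  push_cast at h'
  have h3 : (r:ℚ) ≤ d + 1 := by nlinarith
  exact_mod_cast h3


lemma connected_QS (hr : 0 < r) (S : Set V) :
    ((gadget G' r).induce (QS V r S)).Connected := by
  have hr2 : 0 < r ^ 2 := by positivity
  set a0 : GadgetV V r := a1 V r ⟨0, hr2⟩ with ha0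
  have ha0m : a0 ∈ QS V r S := a1_mem_QS r S _
  have key : ∀ z : QS V r S, ((gadget G' r).induce (QS V r S)).Reachable z ⟨a0, ha0m⟩ := by
    rintro ⟨z, hz⟩
    by_cases hza : z = a0
    · subst hza; exact Reachable.refl _
    · exact Adj.reachable
        (show (gadget G' r).Adj z a0 from (adj_a1 G' r ⟨0, hr2⟩ z hza).symm)
  have : Nonempty (QS V r S) := ⟨⟨a0, ha0m⟩⟩
  exact ⟨fun x y => (key x).trans (key y).symm⟩

lemma quasi_QS [Fintype V] (hr : 0 < r) (S : Set V) (hsr : S.ncard ≤ r)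
    (hd : ∀ u ∈ S, ⌈gammaR r * (((2*r^2 + r + S.ncard : ℕ) : ℚ) - 1)⌉
        ≤ ((r^2 + (S ∩ G'.neighborSet u).ncard : ℕ) : ℤ)) :
    IsQuasiClique (gadget G' r) (gammaR r) (QS V r S) := by
  refine ⟨connected_QS G' r hr S, ?_⟩
  intro v hv
  rw [ncard_QS]
  rcases v with u | i | i | i
  · rw [degIn_inl]
    exact hd u ((mem_QS_inl r S u).1 hv)
  · rw [show (Sum.inr (Sum.inl i) : GadgetV V r) = a1 V r i from rfl, degIn_a1]
    exact T3 r hr S.ncard hsr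
  · rw [show (Sum.inr (Sum.inr (Sum.inl i)) : GadgetV V r) = a2 V r i from rfl, degIn_a2]
    exact T2 r hr S.ncard hsr
  · rw [show (Sum.inr (Sum.inr (Sum.inr i)) : GadgetV V r) = bb V r i from rfl, degIn_bb]
    exact T1 r hr S.ncard hsr


lemma T7 (hr : 0 < r) (d : ℕ) (hd : r ≤ d + 1) :
    ⌈gammaR r * (((2*r^2 + r + r : ℕ) : ℚ) - 1)⌉ ≤ ((r^2 + d : ℕ) : ℤ) := by
  apply ceil_le_of r hr
  have h1 : (1:ℚ) ≤ r := by exact_mod_cast hr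
  have h2 : (r:ℚ) ≤ (d:ℚ) + 1 := by exact_mod_cast hd
  push_cast
  nlinarith

end StmtAux

open StmtAux in
/-- Correctness of the reduction: `X` is a `γ_r`-quasi-clique of the gadget
graph, and `X` is not a maximal `γ_r`-quasi-clique (some `γ_r`-quasi-clique
strictly contains `X`) if and only if `G'` contains a clique of size `r`. -/
theorem stmt_14 {V : Type*} [Fintype V] (G' : SimpleGraph V) (r : ℕ) (hr : 0 < r) :
    IsQuasiClique (gadget G' r) (gammaR r) (Xset V r) ∧
      ((∃ Q' : Set (GadgetV V r),
          IsQuasiClique (gadget G' r) (gammaR r) Q' ∧ Xset V r ⊂ Q') ↔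
        ∃ L : Finset V, G'.IsNClique r L) := by
  have hX : Xset V r = QS V r (∅ : Set V) := by simp [QS]
  constructor
  · rw [hX]
    refine quasi_QS G' r hr ∅ (by simp) ?_
    intro u hu; exact absurd hu (Set.notMem_empty u)
  constructor
  · rintro ⟨Q', hQC, hsub⟩
    set S : Set V := {u | Sum.inl u ∈ Q'} with hSdef
    have hQ' : Q' = QS V r S := by
      ext x
      rcases x with u | i | i | i
      · rw [mem_QS_inl]; exact ⟨fun h => h, fun h => h⟩
      · exact ⟨fun _ => Or.inl (Or.inl trivial),
          fun _ => hsub.subset (Or.inl trivial)⟩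
      · exact ⟨fun _ => Or.inl (Or.inr (Or.inl trivial)),
          fun _ => hsub.subset (Or.inr (Or.inl trivial))⟩
      · exact ⟨fun _ => Or.inl (Or.inr (Or.inr trivial)),
          fun _ => hsub.subset (Or.inr (Or.inr trivial))⟩
    rw [hQ'] at hQC
    obtain ⟨x0, hx0Q, hx0X⟩ := Set.exists_of_ssubset hsub
    have hu0 : ∃ u, u ∈ S := by
      rcases x0 with u | i | i | i
      · exact ⟨u, hx0Q⟩
      · exact absurd (Or.inl trivial) hx0X
      · exact absurd (Or.inr (Or.inl trivial)) hx0X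
      · exact absurd (Or.inr (Or.inr trivial)) hx0X
    obtain ⟨u0, hu0⟩ := hu0
    have hb := hQC.2 (bb V r ⟨0, hr⟩) (Or.inl (Or.inr (Or.inr trivial)))
    rw [ncard_QS, degIn_bb] at hb
    have hsle : S.ncard ≤ r := T4 r hr S.ncard hb
    have h5 := hQC.2 (Sum.inl u0) ((mem_QS_inl r S u0).2 hu0)
    rw [ncard_QS, degIn_inl] at h5
    have hdsub : ∀ u ∈ S, S ∩ G'.neighborSet u ⊆ S \ {u} := by
      intro u hu
      rintro v ⟨hv, hadj⟩
      exact ⟨hv, fun h => G'.irrefl (by rwa [Set.mem_singleton_iff.mp h] at hadj)⟩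
    have hdle : (S ∩ G'.neighborSet u0).ncard + 1 ≤ S.ncard := by
      have h6 : (S \ {u0}).ncard = S.ncard - 1 := Set.ncard_diff_singleton_of_mem hu0
      have h7 := Set.ncard_le_ncard (hdsub u0 hu0) (Set.toFinite _)
      have h8 : 0 < S.ncard := (Set.ncard_pos (Set.toFinite _)).mpr ⟨u0, hu0⟩
      omega
    have hrle : r ≤ S.ncard := T5 r hr S.ncard _ hdle h5
    have hseq : S.ncard = r := le_antisymm hsle hrle
    have hclique : ∀ u ∈ S, S \ {u} ⊆ G'.neighborSet u := by
      intro u hu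
      have h9 := hQC.2 (Sum.inl u) ((mem_QS_inl r S u).2 hu)
      rw [ncard_QS, degIn_inl, hseq] at h9
      have h10 : r ≤ (S ∩ G'.neighborSet u).ncard + 1 := T6 r hr _ h9
      have h11 : (S \ {u}).ncard = r - 1 := by
        rw [Set.ncard_diff_singleton_of_mem hu, hseq]
      have heq : S ∩ G'.neighborSet u = S \ {u} :=
        Set.eq_of_subset_of_ncard_le (hdsub u hu) (by omega) (Set.toFinite _)
      intro v hv
      rw [← heq] at hv
      exact hv.2
    refine ⟨(Set.toFinite S).toFinset, ?_, ?_⟩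
    · intro u hu v hv hne
      simp only [Finset.mem_coe, Set.Finite.mem_toFinset] at hu hv
      exact hclique u hu ⟨hv, fun h => hne (Set.mem_singleton_iff.mp h).symm⟩
    · rw [← Set.ncard_eq_toFinset_card S (Set.toFinite S)]
      exact hseq
  · rintro ⟨L, hL⟩
    have hcard : ((↑L : Set V)).ncard = r := by rw [Set.ncard_coe_finset, hL.2]
    obtain ⟨u1, hu1⟩ := Finset.card_pos.mp (hL.2 ▸ hr)
    refine ⟨QS V r (↑L : Set V), ?_, ?_⟩
    · refine quasi_QS G' r hr _ (le_of_eq hcard) ?_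
      intro u hu
      rw [hcard]
      have hsub2 : (↑L \ {u} : Set V) ⊆ ↑L ∩ G'.neighborSet u := by
        rintro v ⟨hv, hvu⟩
        exact ⟨hv, hL.1 hu hv (fun h => hvu (Set.mem_singleton_iff.mpr h.symm))⟩
      have hd1 : (↑L \ {u} : Set V).ncard = r - 1 := by
        rw [Set.ncard_diff_singleton_of_mem hu, hcard]
      have hd2 : r - 1 ≤ (↑L ∩ G'.neighborSet u : Set V).ncard :=
        hd1 ▸ Set.ncard_le_ncard hsub2 (Set.toFinite _)
      exact T7 r hr _ (by omega)
    · refine (Set.ssubset_iff_of_subset Set.subset_union_left).mpr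
        ⟨Sum.inl u1, ?_, inl_not_mem_Xset r u1⟩
      exact (mem_QS_inl r (↑L : Set V) u1).2 (Finset.mem_coe.mpr hu1)
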